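/- arXiv:1102.3151 — 2 statements merged into one kernel-verified Lean document; each statement's English description precedes it below -/
import Mathlib

section
/- There exist Turing functionals Ψ, Φ such that for all total multivalued functions f, g : {0,1}* ⇉ {0,1}* and any choice function I of f ⊕ g, either Ψ^I is a choice function of f or Φ^I is a choice function of g. -/
/-- Domain of a search problem (relation). -/
def SDom (P : ℕ → ℕ → Prop) : Set ℕ := {x | ∃ y, P x y}

/-- Meet of search problems: `(f ⊕ g)(⟨x,y⟩) = 0·f(x) ∪ 1·g(y)`. -/
def Oplus (f g : ℕ → ℕ → Prop) : ℕ → ℕ → Prop := fun x y =>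
  ∃ a b, x = Nat.pair a b ∧
    ((∃ z, y = 2 * z ∧ f a z ∧ b ∈ SDom g) ∨
     (∃ z, y = 2 * z + 1 ∧ g b z ∧ a ∈ SDom f))

/-- Partial recursiveness relative to an oracle `O` (relativized `Nat.Partrec`);
a Turing functional is an operator that is `RecIn` any oracle it is given. -/
inductive RecIn (O : ℕ →. ℕ) : (ℕ →. ℕ) → Prop
  | zero : RecIn O (pure 0)
  | succ : RecIn O ↑Nat.succ
  | left : RecIn O ↑fun n : ℕ => n.unpair.1
  | right : RecIn O ↑fun n : ℕ => n.unpair.2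
  | oracle : RecIn O O
  | pair {f g} : RecIn O f → RecIn O g → RecIn O fun n => Nat.pair <$> f n <*> g n
  | comp {f g} : RecIn O f → RecIn O g → RecIn O fun n => g n >>= f
  | prec {f g} : RecIn O f → RecIn O g → RecIn O (Nat.unpaired fun a n =>
      n.rec (f a) fun y IH => do let i ← IH; g (Nat.pair a (Nat.pair y i)))
  | rfind {f} : RecIn O f → RecIn O fun a =>
      Nat.rfind fun n => (fun m => m = 0) <$> f (Nat.pair a n)

lemma recIn_of_partrec (O : ℕ →. ℕ) {f : ℕ →. ℕ} (h : Nat.Partrec f) : RecIn O f := by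
  induction h with
  | zero => exact .zero
  | succ => exact .succ
  | left => exact .left
  | right => exact .right
  | pair _ _ ih1 ih2 => exact .pair ih1 ih2
  | comp _ _ ih1 ih2 => exact .comp ih1 ih2
  | prec _ _ ih1 ih2 => exact .prec ih1 ih2
  | rfind _ ih => exact .rfind ih

lemma recIn_total_comp {O : ℕ →. ℕ} {u v : ℕ → ℕ} (hu : RecIn O ↑u) (hv : RecIn O ↑v) :
    RecIn O ↑(fun n => u (v n)) := by
  have h := RecIn.comp hu hv
  have e : (fun n => (↑v : ℕ →. ℕ) n >>= fun m => (↑u : ℕ →. ℕ) m) = (↑(fun n => u (v n)) : ℕ →. ℕ) := by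
    funext n
    simp [PFun.coe_val]
  rwa [e] at h

lemma recIn_of_primrec {O : ℕ →. ℕ} {h : ℕ → ℕ} (hp : Primrec h) : RecIn O ↑h :=
  recIn_of_partrec _ (Partrec.nat_iff.mp hp.to_comp)

lemma recIn_comp_oracle {I : ℕ → ℕ} {u : ℕ → ℕ} (hu : RecIn ↑I ↑u) :
    RecIn ↑I ↑(fun n => u (I n)) :=
  recIn_total_comp hu RecIn.oracle

/-- search operator: least `y` with `q (pair a y) = 0`, then output `r (pair a y)`. -/
def srch (q r : ℕ → ℕ) : ℕ →. ℕ := fun a =>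
  (Nat.rfind fun n => (fun m => m = 0) <$> ((↑q : ℕ →. ℕ) (Nat.pair a n))) >>= fun y =>
    (↑r : ℕ →. ℕ) (Nat.pair a y)

lemma recIn_srch {I : ℕ → ℕ} {q r : ℕ → ℕ} (hq : RecIn ↑I ↑q) (hr : RecIn ↑I ↑r) :
    RecIn ↑I (srch q r) := by
  have hid : RecIn ↑(I : ℕ →. ℕ) ↑(fun n : ℕ => n) := by
    exact recIn_of_partrec _ (Nat.Partrec.of_primrec Nat.Primrec.id)
  have hR := RecIn.rfind hq
  have hP := RecIn.pair hid hR
  have hC := RecIn.comp hr hP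
  have e : (fun n => (Nat.pair <$> (↑(fun n : ℕ => n) : ℕ →. ℕ) n <*>
      (Nat.rfind fun m => (fun k => k = 0) <$> (↑q : ℕ →. ℕ) (Nat.pair n m))) >>= fun m => (↑r : ℕ →. ℕ) m)
      = srch q r := by
    funext a
    simp [srch, PFun.coe_val, Seq.seq, Part.bind_assoc, Part.map_eq_map, Part.bind_map]
  rwa [e] at hC

lemma srch_correct {q r : ℕ → ℕ} {a z : ℕ} (h : z ∈ srch q r a) :
    ∃ y, q (Nat.pair a y) = 0 ∧ z = r (Nat.pair a y) := by
  simp only [srch, Part.bind_eq_bind, Part.mem_bind_iff] at h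
  obtain ⟨y, hy, hz⟩ := h
  have h0 := Nat.rfind_spec hy
  simp [PFun.coe_val] at h0 hz
  exact ⟨y, by simpa using h0, hz⟩

lemma srch_total {q r : ℕ → ℕ} {a : ℕ} (h : ∃ y, q (Nat.pair a y) = 0) :
    ∃ z, z ∈ srch q r a := by
  obtain ⟨y, hy⟩ := h
  have hdom : (Nat.rfind (fun n => (fun m => m = 0) <$> ((↑q : ℕ →. ℕ) (Nat.pair a n)))).Dom := by
    apply Nat.rfind_dom.mpr
    refine ⟨y, ?_, fun {m} _ => by simp [PFun.coe_val]⟩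
    simp [PFun.coe_val, hy]
  obtain ⟨n, hn⟩ := Part.dom_iff_mem.mp hdom
  exact ⟨r (Nat.pair a n), by
    simp only [srch, Part.bind_eq_bind, Part.mem_bind_iff]
    exact ⟨n, hn, by simp [PFun.coe_val]⟩⟩


/-- there are Turing functionals `Ψ`, `Φ` such that for all total
multivalued `f`, `g` and any choice function `I` of `f ⊕ g`, all values of `Ψ^I`
are correct for `f`, all values of `Φ^I` are correct for `g`, and at least one of
`Ψ^I`, `Φ^I` is total — so `Ψ^I` is a choice function of `f` or `Φ^I` one of `g`. -/
theorem turing_functionals_for_oplus :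
    ∃ Ψ Φ : (ℕ → ℕ) → (ℕ →. ℕ),
      (∀ I : ℕ → ℕ, RecIn ↑I (Ψ I) ∧ RecIn ↑I (Φ I)) ∧
      ∀ f g : ℕ → ℕ → Prop, (∀ x, ∃ y, f x y) → (∀ x, ∃ y, g x y) →
        ∀ I : ℕ → ℕ, (∀ x y, Oplus f g (Nat.pair x y) (I (Nat.pair x y))) →
          (∀ x z, z ∈ Ψ I x → f x z) ∧ (∀ y z, z ∈ Φ I y → g y z) ∧
          ((∀ x, ∃ z, z ∈ Ψ I x) ∨ (∀ y, ∃ z, z ∈ Φ I y)) := by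
  -- swap : p ↦ pair p.2 p.1
  set sw : ℕ → ℕ := fun p => Nat.pair p.unpair.2 p.unpair.1 with hsw
  refine ⟨fun I => srch (fun p => I p % 2) (fun p => I p / 2),
          fun I => srch (fun p => (I (sw p) + 1) % 2) (fun p => I (sw p) / 2), ?_, ?_⟩
  · intro I
    have hmod : RecIn (↑I : ℕ →. ℕ) ↑(fun n : ℕ => n % 2) :=
      recIn_of_primrec (Primrec.nat_mod.comp Primrec.id (Primrec.const 2))
    have hdiv : RecIn (↑I : ℕ →. ℕ) ↑(fun n : ℕ => n / 2) :=
      recIn_of_primrec (Primrec.nat_div.comp Primrec.id (Primrec.const 2))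
    have hsucc_mod : RecIn (↑I : ℕ →. ℕ) ↑(fun n : ℕ => (n + 1) % 2) :=
      recIn_of_primrec (Primrec.nat_mod.comp Primrec.succ (Primrec.const 2))
    have hswp : RecIn (↑I : ℕ →. ℕ) ↑sw :=
      recIn_of_primrec (Primrec₂.natPair.comp (Primrec.snd.comp Primrec.unpair)
        (Primrec.fst.comp Primrec.unpair))
    have hIsw : RecIn (↑I : ℕ →. ℕ) ↑(fun p => I (sw p)) :=
      recIn_total_comp RecIn.oracle hswp
    constructor
    · exact recIn_srch (recIn_comp_oracle hmod) (recIn_comp_oracle hdiv)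
    · exact recIn_srch (recIn_total_comp hsucc_mod hIsw) (recIn_total_comp hdiv hIsw)
  · intro f g hf hg I hI
    have key : ∀ x y, (∃ z, I (Nat.pair x y) = 2 * z ∧ f x z) ∨
        (∃ z, I (Nat.pair x y) = 2 * z + 1 ∧ g y z) := by
      intro x y
      obtain ⟨a, b, hab, h⟩ := hI x y
      obtain ⟨ha, hb⟩ := Nat.pair_eq_pair.mp hab.symm
      rcases h with ⟨z, hz, hfz, -⟩ | ⟨z, hz, hgz, -⟩
      · exact Or.inl ⟨z, hz, ha ▸ hfz⟩
      · exact Or.inr ⟨z, hz, hb ▸ hgz⟩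
    have hswpair : ∀ x y, sw (Nat.pair y x) = Nat.pair x y := by
      intro x y; simp [hsw]
    refine ⟨?_, ?_, ?_⟩
    · intro x z hz
      obtain ⟨y, hy, rfl⟩ := srch_correct hz
      rcases key x y with ⟨w, hw, hfw⟩ | ⟨w, hw, -⟩
      · have : I (Nat.pair x y) / 2 = w := by omega
        rwa [this]
      · omega
    · intro y z hz
      obtain ⟨x, hx, rfl⟩ := srch_correct hz
      rw [hswpair] at hx ⊢
      rcases key x y with ⟨w, hw, -⟩ | ⟨w, hw, hgw⟩
      · omega
      · have : I (Nat.pair x y) / 2 = w := by omega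
        rwa [this]
    · by_cases hc : ∀ x, ∃ y, I (Nat.pair x y) % 2 = 0
      · exact Or.inl fun x => srch_total (hc x)
      · push_neg at hc
        obtain ⟨x, hx⟩ := hc
        refine Or.inr fun y => srch_total ⟨x, ?_⟩
        rw [hswpair]
        have := hx y
        omega
end

section
/- If total search problems f and g satisfy that f ⊕ g has a computable choice function, then f has a computable choice function or g has a computable choice function. Consequently, degrees with total representatives cannot form a nontrivial meet giving the bottom nonzero degree 1 in the computable many-one degrees of search problems. -/
/-- Graph of a partial function as a search problem. -/
def SGraph (f : ℕ →. ℕ) : ℕ → ℕ → Prop := fun x y => y ∈ f x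

/-- Composition of relations: `RComp P Q = P ∘ Q`. -/
def RComp (P Q : ℕ → ℕ → Prop) : ℕ → ℕ → Prop := fun x z => ∃ y, Q x y ∧ P y z

/-- Entailment order on search problems: `P' ≼ P`. -/
def Ent (P' P : ℕ → ℕ → Prop) : Prop :=
  SDom P' ⊆ SDom P ∧ ∀ x y, P x y → P' x y

/-- Pairing of partial functions: `x ↦ ⟨f x, g x⟩`. -/
def PPair (f g : ℕ →. ℕ) : ℕ →. ℕ :=
  fun x => (f x).bind fun a => (g x).map fun b => Nat.pair a b

/-- Many-one reducibility with computable (partial recursive) witnesses. -/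
def RedM (P Q : ℕ → ℕ → Prop) : Prop :=
  ∃ H K : ℕ →. ℕ, Nat.Partrec H ∧ Nat.Partrec K ∧
    (∀ x ∈ SDom P, ∃ k ∈ K x, k ∈ SDom Q) ∧
    (∀ x ∈ SDom P, ∀ k ∈ K x, ∀ y, Q k y → ∃ h ∈ H (Nat.pair x y), P x h)

/-- The identity function on strings, as a search problem (its degree is `1`). -/
def IdRel : ℕ → ℕ → Prop := fun x y => y = x

/-- A total multivalued function has a computable choice function. -/
def HasTotalCompChoice (f : ℕ → ℕ → Prop) : Prop :=
  ∃ c : ℕ → ℕ, Computable c ∧ ∀ x, f x (c x)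

-- auxiliary lemmas

lemma choice_to_red {P : ℕ → ℕ → Prop} (h : HasTotalCompChoice P) : RedM P IdRel := by
  obtain ⟨c, hc, hPc⟩ := h
  refine ⟨fun n => Part.some (c n.unpair.1), fun x => Part.some (c x), ?_, ?_, ?_, ?_⟩
  · exact Partrec.nat_iff.1 (hc.comp ((Primrec.fst.comp Primrec.unpair).to_comp)).partrec
  · exact Partrec.nat_iff.1 hc.partrec
  · intro x _
    exact ⟨c x, Part.mem_some _, ⟨c x, rfl⟩⟩
  · intro x _ k hk y hy
    refine ⟨c (Nat.pair x y).unpair.1, Part.mem_some _, ?_⟩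
    simp [Nat.unpair_pair]
    exact hPc x

lemma red_to_choice {P : ℕ → ℕ → Prop} (htot : ∀ x, ∃ y, P x y)
    (h : RedM P IdRel) : HasTotalCompChoice P := by
  obtain ⟨H, K, hH, hK, h1, h2⟩ := h
  have hdomP : ∀ x, x ∈ SDom P := htot
  have hKdom : ∀ x, (K x).Dom := by
    intro x
    obtain ⟨k, hk, -⟩ := h1 x (hdomP x)
    exact Part.dom_iff_mem.2 ⟨k, hk⟩
  set kf : ℕ → ℕ := fun x => (K x).get (hKdom x) with hkf
  have hkfc : Computable kf :=
    (Partrec.nat_iff.2 hK).of_eq_tot fun x => Part.get_mem _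
  have hHdom : ∀ x, (H (Nat.pair x (kf x))).Dom := by
    intro x
    obtain ⟨h', hh', -⟩ := h2 x (hdomP x) (kf x) (Part.get_mem _) (kf x) rfl
    exact Part.dom_iff_mem.2 ⟨h', hh'⟩
  refine ⟨fun x => (H (Nat.pair x (kf x))).get (hHdom x), ?_, ?_⟩
  · exact ((Partrec.nat_iff.2 hH).comp
      ((Primrec₂.natPair.to_comp.comp Computable.id hkfc))).of_eq_tot
      fun x => Part.get_mem _
  · intro x
    obtain ⟨h', hh', hPh⟩ := h2 x (hdomP x) (kf x) (Part.get_mem _) (kf x) rfl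
    show P x ((H (Nat.pair x (kf x))).get (hHdom x))
    rw [Part.get_eq_of_mem hh']; exact hPh

lemma oplus_choice {f g : ℕ → ℕ → Prop} (hf : ∀ x, ∃ y, f x y) (hg : ∀ x, ∃ y, g x y)
    (h : HasTotalCompChoice (Oplus f g)) :
    HasTotalCompChoice f ∨ HasTotalCompChoice g := by
  obtain ⟨c, hc, hOc⟩ := h
  have key : ∀ a b, (c (Nat.pair a b) % 2 = 0 ∧ f a (c (Nat.pair a b) / 2)) ∨
      (c (Nat.pair a b) % 2 = 1 ∧ g b (c (Nat.pair a b) / 2)) := by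
    intro a b
    obtain ⟨a', b', hab, hcase⟩ := hOc (Nat.pair a b)
    obtain ⟨ha, hb⟩ := Nat.pair_eq_pair.1 hab
    subst ha; subst hb
    rcases hcase with ⟨z, hz, hfz, -⟩ | ⟨z, hz, hgz, -⟩
    · left; constructor
      · omega
      · have : c (Nat.pair a b) / 2 = z := by omega
        rw [this]; exact hfz
    · right; constructor
      · omega
      · have : c (Nat.pair a b) / 2 = z := by omega
        rw [this]; exact hgz
  by_cases hA : ∃ a0, ∀ b, c (Nat.pair a0 b) % 2 = 1
  · right
    obtain ⟨a0, ha0⟩ := hA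
    refine ⟨fun b => c (Nat.pair a0 b) / 2, ?_, ?_⟩
    · exact (Primrec.nat_div.comp Primrec.id (Primrec.const 2)).to_comp.comp
        (hc.comp ((Primrec₂.natPair.comp (Primrec.const a0) Primrec.id).to_comp))
    · intro b
      rcases key a0 b with ⟨he, -⟩ | ⟨-, hgb⟩
      · exact absurd (ha0 b) (by omega)
      · exact hgb
  · left
    have hB : ∀ a, ∃ b, c (Nat.pair a b) % 2 = 0 := by
      intro a
      by_contra hcon
      push_neg at hcon
      exact hA ⟨a, fun b => by have := hcon b; omega⟩
    refine ⟨fun a => c (Nat.pair a (Nat.find (hB a))) / 2, ?_, ?_⟩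
    · -- computability via rfind
      have hp : Partrec₂ (fun a b : ℕ => Part.some (decide (c (Nat.pair a b) % 2 = 0))) := by
        apply Computable₂.partrec₂
        exact Computable₂.mk <| (Primrec.eq.comp
          (Primrec.nat_mod.comp (Primrec.comp Primrec.encode Primrec.id) (Primrec.const 2))
          (Primrec.const 0)).decide.to_comp.comp
          (hc.comp (Primrec₂.natPair.to_comp.comp Computable.fst Computable.snd))
      have hF : Partrec fun a =>
          (Nat.rfind fun b => Part.some (decide (c (Nat.pair a b) % 2 = 0))).map
            fun b => c (Nat.pair a b) / 2 := by
        refine (Partrec.rfind hp).map ?_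
        exact Computable₂.mk <| (Primrec.nat_div.comp Primrec.id (Primrec.const 2)).to_comp.comp
          (hc.comp (Primrec₂.natPair.to_comp.comp Computable.fst Computable.snd))
      refine hF.of_eq_tot fun a => ?_
      refine Part.mem_map _ ?_
      refine Nat.mem_rfind.2 ?_
      constructor
      · simp [Nat.find_spec (hB a)]
      · intro m hm
        simp [Nat.find_min (hB a) hm]
    · intro a
      rcases key a (Nat.find (hB a)) with ⟨-, hfa⟩ | ⟨ho, -⟩
      · exact hfa
      · exact absurd (Nat.find_spec (hB a)) (by omega)

/-- if total search problems `f`, `g` are such that `f ⊕ g` has a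
computable choice function, then `f` or `g` has one; consequently, for degrees
with total representatives, `f ⊕ g ≡ 1` forces `f ≡ 1` or `g ≡ 1`, so no two
such nontrivial degrees can have the bottom nonzero degree `1` as their meet. -/
theorem oplus_choice_split :
    (∀ f g : ℕ → ℕ → Prop, (∀ x, ∃ y, f x y) → (∀ x, ∃ y, g x y) →
      HasTotalCompChoice (Oplus f g) →
      HasTotalCompChoice f ∨ HasTotalCompChoice g) ∧
    (∀ f g : ℕ → ℕ → Prop, (∀ x, ∃ y, f x y) → (∀ x, ∃ y, g x y) →
      RedM (Oplus f g) IdRel → RedM f IdRel ∨ RedM g IdRel) := by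
  constructor
  · exact fun f g hf hg h => oplus_choice hf hg h
  · intro f g hf hg hred
    have htot : ∀ x, ∃ y, Oplus f g x y := by
      intro x
      obtain ⟨z, hz⟩ := hf x.unpair.1
      obtain ⟨w, hw⟩ := hg x.unpair.2
      exact ⟨2 * z, x.unpair.1, x.unpair.2, (Nat.pair_unpair x).symm,
        Or.inl ⟨z, rfl, hz, ⟨w, hw⟩⟩⟩
    rcases oplus_choice hf hg (red_to_choice htot hred) with h | h
    · exact Or.inl (choice_to_red h)
    · exact Or.inr (choice_to_red h)
end
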